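/- Let γ ∈ Γ be a collection satisfying the bound condition. In the multilayer setting with widths n_0, …, n_L and layers h = (h_1, …, h_L), for every l ∈ {2, …, L}, the dimension histograms satisfy the recursion H̃^{(l)}(𝒮^{(l)}_h) ≼ φ^{(γ)}_{n_l}(H̃^{(l-1)}(𝒮^{(l-1)}_h)). -/

import Mathlib

open Matrix

noncomputable def relu {n n' : ℕ} (W : Matrix (Fin n') (Fin n) ℝ) (b : Fin n' → ℝ)
    (x : Fin n → ℝ) : Fin n' → ℝ :=
  fun i => max 0 (W i ⬝ᵥ x + b i)

noncomputable def sig {n n' : ℕ} (W : Matrix (Fin n') (Fin n) ℝ) (b : Fin n' → ℝ)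
    (x : Fin n → ℝ) : Fin n' → Bool :=
  fun i => decide (0 < W i ⬝ᵥ x + b i)

/-- Forward pass through the first `l` layers: `fwd n W b l = h_l ∘ ⋯ ∘ h_1`. -/
noncomputable def fwd (n : ℕ → ℕ) (W : ∀ l : ℕ, Matrix (Fin (n (l + 1))) (Fin (n l)) ℝ)
    (b : ∀ l : ℕ, Fin (n (l + 1)) → ℝ) : (l : ℕ) → (Fin (n 0) → ℝ) → (Fin (n l) → ℝ)
  | 0 => fun x => x
  | l + 1 => fun x => relu (W l) (b l) (fwd n W b l x)

/-- Multi signature of length `m`: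
`msig n W b m x = (S_{h_1}(x), S_{h_2}(h_1(x)), …, S_{h_m}(h_{m-1}∘⋯∘h_1(x)))`. -/
noncomputable def msig (n : ℕ → ℕ) (W : ∀ l : ℕ, Matrix (Fin (n (l + 1))) (Fin (n l)) ℝ)
    (b : ∀ l : ℕ, Fin (n (l + 1)) → ℝ) (m : ℕ) (x : Fin (n 0) → ℝ) :
    ∀ l : Fin m, Fin (n (l.val + 1)) → Bool :=
  fun l => sig (W l.val) (b l.val) (fwd n W b l.val x)

/-- Number of active units of a binary vector `s`, i.e. `|s|`. -/
def cnt {k : ℕ} (s : Fin k → Bool) : ℕ := (Finset.univ.filter fun j => s j = true).card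

/-- `min(n_0, |s_1|, …, |s_i|)` for a length-`i` multi signature `s`. -/
def minAct (n : ℕ → ℕ) (i : ℕ) (s : ∀ l : Fin i, Fin (n (l.val + 1)) → Bool) : ℕ :=
  Finset.univ.fold min (n 0) (fun l : Fin i => cnt (s l))


/-- Tail sum `∑_{j ≥ J} v j` of a histogram. -/
noncomputable def tailSum (v : ℕ → ℕ) (J : ℕ) : ℕ :=
  ∑' j : ℕ, if J ≤ j then v j else 0

/-- The partial order `≼` on histograms: `v ≼ w` iff all tail sums of `v` are dominated by
those of `w`. -/
def hle (v w : ℕ → ℕ) : Prop := ∀ J : ℕ, tailSum v J ≤ tailSum w J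

/-- The histogram `e_i` with a single entry `1` at index `i`. -/
def histE (i : ℕ) : ℕ → ℕ := fun j => if j = i then 1 else 0

/-- The activation histogram `ℋ_{n'}(𝒮)`: entry `j` counts the signatures `s ∈ 𝒮` with
`|s| = j` active units. -/
noncomputable def actHist (n' : ℕ) (S : Set (Fin n' → Bool)) : ℕ → ℕ :=
  fun j => {s ∈ S | cnt s = j}.ncard

/-- The clipping function `cl_k`: all mass at indices `≥ k` is moved to index `k`. -/
noncomputable def clip (k : ℕ) (v : ℕ → ℕ) : ℕ → ℕ :=
  fun i => if i < k then v i else if i = k then tailSum v k else 0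

/-- The bound condition for a collection `γ` (accessed as `γ n' n` for `n ≤ n'`, `n' ≥ 1`):
every `γ n' n` is a histogram in `V` (finitely supported); for every ReLU layer function
`h ∈ RL(n, n')` with `0 ≤ n ≤ n'` the activation histogram of its attained signatures is
dominated by `γ n' n` (for `n = 0` the layer functions are the constants, with activation
histogram `e_0`); and `γ n' n ≼ γ n' m` whenever `n ≤ m ≤ n'`. -/
def BoundCondition (γ : ℕ → ℕ → ℕ → ℕ) : Prop :=
  (∀ n' n : ℕ, 0 < n' → n ≤ n' → (Function.support (γ n' n)).Finite) ∧
  (∀ n' : ℕ, 0 < n' → hle (histE 0) (γ n' 0)) ∧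
  (∀ n n' : ℕ, 0 < n → 0 < n' → n ≤ n' →
    ∀ (W : Matrix (Fin n') (Fin n) ℝ) (b : Fin n' → ℝ),
      hle (actHist n' (Set.range (sig W b))) (γ n' n)) ∧
  (∀ n' n m : ℕ, 0 < n' → n ≤ m → m ≤ n' → hle (γ n' n) (γ n' m))

/-- The transition function `φ^{(γ)}_{n'} : V → V`,
`v ↦ ∑_{m} v_m · cl_{min(m,n')}(γ_{min(m,n'), n'})`. -/
noncomputable def phi (γ : ℕ → ℕ → ℕ → ℕ) (n' : ℕ) (v : ℕ → ℕ) : ℕ → ℕ :=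
  fun i => ∑' m : ℕ, v m * clip (min m n') (γ n' (min m n')) i

/-- The dimension histogram `H̃^{(i)}(U)`: entry `j` counts the length-`i` multi signatures
`(s_1, …, s_i) ∈ U` with `min(n_0, |s_1|, …, |s_i|) = j`. -/
noncomputable def dimHist (n : ℕ → ℕ) (i : ℕ)
    (U : Set (∀ l : Fin i, Fin (n (l.val + 1)) → Bool)) : ℕ → ℕ :=
  fun j => {u ∈ U | minAct n i u = j}.ncard


lemma tsum_eq_range {f : ℕ → ℕ} {N : ℕ} (h : ∀ j, N ≤ j → f j = 0) :
    ∑' j, f j = ∑ j ∈ Finset.range N, f j := by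
  apply tsum_eq_sum
  intro b hb
  exact h b (by simpa using hb)

lemma tailSum_eq {v : ℕ → ℕ} {N : ℕ} (h : ∀ j, N ≤ j → v j = 0) (J : ℕ) :
    tailSum v J = ∑ j ∈ Finset.range N, if J ≤ j then v j else 0 := by
  unfold tailSum
  exact tsum_eq_range (fun j hj => by simp [h j hj])

lemma clip_zero {k : ℕ} {v : ℕ → ℕ} : ∀ i, k + 1 ≤ i → clip k v i = 0 := by
  intro i hi
  unfold clip
  rw [if_neg (by omega), if_neg (by omega)]

lemma tailSum_clip {v : ℕ → ℕ} {N : ℕ} (hN : ∀ j, N ≤ j → v j = 0) (k J : ℕ) :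
    tailSum (clip k v) J = if J ≤ k then tailSum v J else 0 := by
  rw [tailSum_eq clip_zero J]
  by_cases hJk : J ≤ k
  · rw [if_pos hJk, Finset.sum_range_succ]
    have hterm : (if J ≤ k then clip k v k else 0) = tailSum v k := by
      rw [if_pos hJk]
      unfold clip
      rw [if_neg (lt_irrefl k), if_pos rfl]
    rw [hterm]
    have hmain : (∑ j ∈ Finset.range k, if J ≤ j then clip k v j else 0)
        = ∑ j ∈ Finset.range k, if J ≤ j then v j else 0 := by
      apply Finset.sum_congr rfl
      intro j hj
      rw [Finset.mem_range] at hj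
      by_cases h2 : J ≤ j
      · rw [if_pos h2, if_pos h2]
        unfold clip
        rw [if_pos hj]
      · rw [if_neg h2, if_neg h2]
    rw [hmain]
    set M := max N (k+1) with hM
    have hvM : ∀ j, M ≤ j → v j = 0 := fun j hj => hN j (le_trans (le_max_left _ _) hj)
    have h1 : ∀ J' : ℕ, J' ≤ k → (∑ j ∈ Finset.range M, if J' ≤ j then v j else 0) =
        (∑ j ∈ Finset.range k, if J' ≤ j then v j else 0) + ∑ j ∈ Finset.Ico k M, v j := by
      intro J' hJ'
      rw [Finset.range_eq_Ico,
        ← Finset.sum_Ico_consecutive (fun j => if J' ≤ j then v j else 0)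
          (Nat.zero_le k) (by omega)]
      congr 1
      · rw [Finset.range_eq_Ico]
      apply Finset.sum_congr rfl
      intro j hj
      rw [Finset.mem_Ico] at hj
      rw [if_pos (by omega)]
    rw [tailSum_eq hvM J, tailSum_eq hvM k, h1 J hJk, h1 k le_rfl]
    have h0 : (∑ j ∈ Finset.range k, if k ≤ j then v j else 0) = 0 := by
      apply Finset.sum_eq_zero
      intro j hj
      rw [Finset.mem_range] at hj
      rw [if_neg (by omega)]
    rw [h0, zero_add]
  · rw [if_neg hJk]
    apply Finset.sum_eq_zero
    intro j hj
    rw [Finset.mem_range] at hj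
    by_cases h2 : J ≤ j
    · rw [if_pos h2, clip_zero j (by omega)]
    · rw [if_neg h2]

lemma tail_count {α : Type*} [Fintype α] (U : Set α) (f : α → ℕ) (N : ℕ)
    (hN : ∀ u, f u < N) (J : ℕ) :
    tailSum (fun j => {u ∈ U | f u = j}.ncard) J = {u ∈ U | J ≤ f u}.ncard := by
  classical
  have hcard : ∀ p : α → Prop, {u ∈ U | p u}.ncard
      = ∑ u : α, if u ∈ U ∧ p u then 1 else 0 := by
    intro p
    rw [show {u ∈ U | p u} = ↑(Finset.univ.filter (fun u => u ∈ U ∧ p u)) by ext u; simp,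
      Set.ncard_coe_finset, Finset.card_filter]
  rw [tailSum_eq (N := N) (v := fun j => {u ∈ U | f u = j}.ncard)
    (fun j hj => by
      have he : {u ∈ U | f u = j} = ∅ := by
        ext u
        simp only [Set.mem_setOf_eq, Set.mem_empty_iff_false, iff_false]
        rintro ⟨_, h⟩
        exact absurd (hN u) (by omega)
      simp [he]) J]
  calc (∑ j ∈ Finset.range N, if J ≤ j then {u ∈ U | f u = j}.ncard else 0)
      = ∑ j ∈ Finset.range N, ∑ u : α,
          (if J ≤ j then if u ∈ U ∧ f u = j then 1 else 0 else 0) := by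
        apply Finset.sum_congr rfl
        intro j _
        by_cases hJj : J ≤ j
        · rw [if_pos hJj, hcard]
          symm
          apply Finset.sum_congr rfl
          intro u _
          rw [if_pos hJj]
          congr
        · rw [if_neg hJj]
          symm
          apply Finset.sum_eq_zero
          intro u _
          rw [if_neg hJj]
    _ = ∑ u : α, ∑ j ∈ Finset.range N,
          (if J ≤ j then if u ∈ U ∧ f u = j then 1 else 0 else 0) := Finset.sum_comm
    _ = ∑ u : α, if u ∈ U ∧ J ≤ f u then 1 else 0 := by
        apply Finset.sum_congr rfl
        intro u _
        by_cases hu : u ∈ U ∧ J ≤ f u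
        · rw [if_pos hu]
          rw [Finset.sum_eq_single_of_mem (f u) (Finset.mem_range.2 (hN u))]
          · rw [if_pos hu.2, if_pos ⟨hu.1, rfl⟩]
          · intro j _ hne
            by_cases hJj : J ≤ j
            · rw [if_pos hJj, if_neg (fun h => hne h.2.symm)]
            · rw [if_neg hJj]
        · rw [if_neg hu]
          apply Finset.sum_eq_zero
          intro j _
          by_cases hJj : J ≤ j
          · rw [if_pos hJj, if_neg (fun h => hu ⟨h.1, by rw [h.2]; exact hJj⟩)]
          · rw [if_neg hJj]
    _ = {u ∈ U | J ≤ f u}.ncard := by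
        rw [hcard]
        apply Finset.sum_congr rfl
        intro u _
        congr

lemma support_bound {f : ℕ → ℕ} (h : (Function.support f).Finite) :
    ∃ N, ∀ j, N ≤ j → f j = 0 := by
  obtain ⟨N, hN⟩ := h.bddAbove
  refine ⟨N + 1, fun j hj => ?_⟩
  by_contra hf
  exact absurd (hN (Function.mem_support.2 hf)) (by omega)

lemma cnt_le {k : ℕ} (s : Fin k → Bool) : cnt s ≤ k := by
  unfold cnt
  calc (Finset.univ.filter fun j => s j = true).card ≤ Finset.univ.card :=
        Finset.card_filter_le _ _
    _ = k := by simp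

lemma minAct_le (n : ℕ → ℕ) (i : ℕ) (s : ∀ l : Fin i, Fin (l.val + 1 |> n) → Bool) :
    minAct n i s ≤ n 0 :=
  Finset.fold_min_le _ |>.2 (Or.inl le_rfl)

lemma minAct_succ (n : ℕ → ℕ) (k : ℕ) (u : ∀ l : Fin (k+1), Fin (n (l.val + 1)) → Bool) :
    minAct n (k+1) u = min (cnt (u (Fin.last k))) (minAct n k (fun l => u l.castSucc)) := by
  unfold minAct
  rw [Fin.univ_castSuccEmb, Finset.fold_cons, Finset.fold_map]
  rfl

lemma tailSum_phi (γ : ℕ → ℕ → ℕ → ℕ) (n' : ℕ) (v : ℕ → ℕ) (M : ℕ)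
    (hv : ∀ m, M ≤ m → v m = 0) (J : ℕ) :
    tailSum (phi γ n' v) J
      = ∑ m ∈ Finset.range M, v m * tailSum (clip (min m n') (γ n' (min m n'))) J := by
  have hphi0 : ∀ i, n' + 1 ≤ i → phi γ n' v i = 0 := by
    intro i hi
    unfold phi
    have : ∀ m : ℕ, v m * clip (min m n') (γ n' (min m n')) i = 0 := by
      intro m
      rw [clip_zero i (by omega), mul_zero]
    simp [this]
  have hphi : ∀ i, phi γ n' v i
      = ∑ m ∈ Finset.range M, v m * clip (min m n') (γ n' (min m n')) i := by
    intro i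
    unfold phi
    exact tsum_eq_range (fun m hm => by rw [hv m hm, zero_mul])
  rw [tailSum_eq hphi0 J]
  have : ∀ m ∈ Finset.range M, v m * tailSum (clip (min m n') (γ n' (min m n'))) J
      = ∑ i ∈ Finset.range (n'+1),
          (if J ≤ i then v m * clip (min m n') (γ n' (min m n')) i else 0) := by
    intro m _
    rw [tailSum_eq (v := clip (min m n') (γ n' (min m n')))
      (N := n'+1) (fun i hi => clip_zero i (by omega)) J, Finset.mul_sum]
    apply Finset.sum_congr rfl
    intro i _
    by_cases hJi : J ≤ i
    · rw [if_pos hJi, if_pos hJi]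
    · rw [if_neg hJi, if_neg hJi, mul_zero]
  rw [Finset.sum_congr rfl this, Finset.sum_comm]
  apply Finset.sum_congr rfl
  intro i _
  rw [hphi i]
  by_cases hJi : J ≤ i
  · rw [if_pos hJi]
    apply Finset.sum_congr rfl
    intro m _
    rw [if_pos hJi]
  · rw [if_neg hJi]
    symm
    apply Finset.sum_eq_zero
    intro m _
    rw [if_neg hJi]

lemma fwd_affine (n : ℕ → ℕ)
    (W : ∀ l : ℕ, Matrix (Fin (n (l + 1))) (Fin (n l)) ℝ)
    (b : ∀ l : ℕ, Fin (n (l + 1)) → ℝ) :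
    ∀ (k : ℕ) (u : ∀ l : Fin k, Fin (n (l.val + 1)) → Bool),
    ∃ (d : ℕ), d ≤ minAct n k u ∧
    ∃ (A : Matrix (Fin (n k)) (Fin d) ℝ) (c : Fin (n k) → ℝ)
      (g : (Fin (n 0) → ℝ) → (Fin d → ℝ)),
      ∀ x, msig n W b k x = u → fwd n W b k x = A *ᵥ g x + c := by
  intro k
  induction k with
  | zero =>
    intro u
    refine ⟨n 0, le_of_eq (by simp [minAct]), 1, 0, id, fun x _ => ?_⟩
    simp [fwd, Matrix.one_mulVec]
  | succ k ih =>
    intro u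
    obtain ⟨d, hd, A, c, g, hA⟩ := ih (fun l => u l.castSucc)
    set s : Fin (n (k+1)) → Bool := u (Fin.last k) with hs_def
    have hmin : minAct n (k+1) u = min (cnt s) (minAct n k (fun l => u l.castSucc)) :=
      minAct_succ n k u
    -- facts about points in the region
    have hreg : ∀ x, msig n W b (k+1) x = u →
        (msig n W b k x = (fun l : Fin k => u l.castSucc)) ∧
        (sig (W k) (b k) (fwd n W b k x) = s) := by
      intro x hx
      constructor
      · funext l
        exact congrFun hx l.castSucc
      · exact congrFun hx (Fin.last k)
    have hfwd_succ : ∀ x, fwd n W b (k+1) x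
        = fun i => max 0 (W k i ⬝ᵥ fwd n W b k x + b k i) := fun x => rfl
    by_cases hds : d ≤ cnt s
    · -- propagate the old affine description
      refine ⟨d, by rw [hmin]; exact le_min hds hd, ?_⟩
      refine ⟨(fun i a => if s i = true then (W k * A) i a else 0),
        (fun i => if s i = true then W k i ⬝ᵥ c + b k i else 0), g, ?_⟩
      intro x hx
      obtain ⟨hpre, hsig⟩ := hreg x hx
      have hfk : fwd n W b k x = A *ᵥ g x + c := hA x hpre
      funext i
      rw [hfwd_succ]
      show max 0 (W k i ⬝ᵥ fwd n W b k x + b k i) = _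
      by_cases hsi : s i = true
      · have hpos : 0 < W k i ⬝ᵥ fwd n W b k x + b k i := by
          have := congrFun hsig i
          rw [hsi] at this
          exact of_decide_eq_true this
        rw [max_eq_right hpos.le, hfk]
        have h1 : W k i ⬝ᵥ (A *ᵥ g x + c) = (W k * A) i ⬝ᵥ g x + W k i ⬝ᵥ c := by
          rw [dotProduct_add]
          congr 1
          exact congrFun (Matrix.mulVec_mulVec (g x) (W k) A) i
        rw [h1]
        show _ = (fun i a => if s i = true then (W k * A) i a else 0) i ⬝ᵥ g x
          + if s i = true then W k i ⬝ᵥ c + b k i else 0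
        rw [if_pos hsi]
        have h2 : (fun a => if s i = true then (W k * A) i a else 0) ⬝ᵥ g x
            = (W k * A) i ⬝ᵥ g x := by
          apply Finset.sum_congr rfl
          intro a _
          simp [hsi]
        rw [h2]
        ring
      · have hsif : s i = false := by
          rw [← Bool.not_eq_true]
          exact hsi
        have hnpos : ¬ (0 < W k i ⬝ᵥ fwd n W b k x + b k i) := by
          have := congrFun hsig i
          rw [hsif] at this
          exact of_decide_eq_false this
        rw [max_eq_left (le_of_not_gt hnpos)]
        show (0:ℝ) = (fun i a => if s i = true then (W k * A) i a else 0) i ⬝ᵥ g x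
          + if s i = true then W k i ⬝ᵥ c + b k i else 0
        rw [if_neg hsi]
        have h2 : (fun a => if s i = true then (W k * A) i a else 0) ⬝ᵥ g x = 0 := by
          apply Finset.sum_eq_zero
          intro a _
          simp [hsi]
        rw [h2, add_zero]
    · -- switch to enumeration of active coordinates
      set act : Finset (Fin (n (k+1))) := Finset.univ.filter (fun i => s i = true) with hact
      have hcard : act.card = cnt s := rfl
      set e : act ≃ Fin (cnt s) := act.equivFin with he
      refine ⟨cnt s, by rw [hmin]; exact le_min le_rfl (le_trans (by omega) hd), ?_⟩
      refine ⟨(fun i a => if ((e.symm a : act) : Fin (n (k+1))) = i then 1 else 0), 0,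
        (fun x a => fwd n W b (k+1) x ((e.symm a : act) : Fin (n (k+1)))), ?_⟩
      intro x hx
      obtain ⟨hpre, hsig⟩ := hreg x hx
      funext i
      have hsum : ((fun i a => if ((e.symm a : act) : Fin (n (k+1))) = i then (1:ℝ) else 0) *ᵥ
          (fun a => fwd n W b (k+1) x ((e.symm a : act) : Fin (n (k+1))))) i
          = ∑ a : Fin (cnt s), if ((e.symm a : act) : Fin (n (k+1))) = i
              then fwd n W b (k+1) x ((e.symm a : act) : Fin (n (k+1))) else 0 := by
        show (∑ a : Fin (cnt s), (if ((e.symm a : act) : Fin (n (k+1))) = i then (1:ℝ) else 0) *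
            fwd n W b (k+1) x ((e.symm a : act) : Fin (n (k+1)))) = _
        apply Finset.sum_congr rfl
        intro a _
        rw [ite_mul, one_mul, zero_mul]
      show fwd n W b (k+1) x i = _ + (0 : Fin (n (k+1)) → ℝ) i
      rw [Pi.zero_apply, add_zero, hsum]
      by_cases hsi : s i = true
      · have hi : i ∈ act := Finset.mem_filter.2 ⟨Finset.mem_univ _, hsi⟩
        have hcond : ∀ a : Fin (cnt s),
            (((e.symm a : act) : Fin (n (k+1))) = i) ↔ (a = e ⟨i, hi⟩) := by
          intro a
          constructor
          · intro h
            have : (e.symm a : act) = ⟨i, hi⟩ := Subtype.ext h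
            rw [← this, Equiv.apply_symm_apply]
          · intro h
            rw [h, Equiv.symm_apply_apply]
        have : (∑ a : Fin (cnt s), if ((e.symm a : act) : Fin (n (k+1))) = i
              then fwd n W b (k+1) x ((e.symm a : act) : Fin (n (k+1))) else 0)
            = ∑ a : Fin (cnt s), if a = e ⟨i, hi⟩
              then fwd n W b (k+1) x ((e.symm a : act) : Fin (n (k+1))) else 0 := by
          apply Finset.sum_congr rfl
          intro a _
          by_cases h : a = e ⟨i, hi⟩
          · rw [if_pos ((hcond a).2 h), if_pos h]
          · rw [if_neg (fun hc => h ((hcond a).1 hc)), if_neg h]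
        rw [this, Finset.sum_ite_eq' Finset.univ (e ⟨i, hi⟩)
          (fun a => fwd n W b (k+1) x ((e.symm a : act) : Fin (n (k+1)))),
          if_pos (Finset.mem_univ _), Equiv.symm_apply_apply]
      · have hsif : s i = false := by
          rw [← Bool.not_eq_true]
          exact hsi
        have hzero : fwd n W b (k+1) x i = 0 := by
          have hnpos : ¬ (0 < W k i ⬝ᵥ fwd n W b k x + b k i) := by
            have := congrFun hsig i
            rw [hsif] at this
            exact of_decide_eq_false this
          rw [hfwd_succ]
          exact max_eq_left (le_of_not_gt hnpos)
        rw [hzero]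
        symm
        apply Finset.sum_eq_zero
        intro a _
        have : ((e.symm a : act) : Fin (n (k+1))) ≠ i := by
          intro h
          have hmem2 : s ((e.symm a : act) : Fin (n (k+1))) = true :=
            (Finset.mem_filter.mp (e.symm a).2).2
          exact hsi (h ▸ hmem2)
        rw [if_neg this]

lemma dot_pad {d q : ℕ} (hdq : d ≤ q) (w y : Fin d → ℝ) :
    (fun a : Fin q => if h : (a : ℕ) < d then w ⟨a, h⟩ else 0) ⬝ᵥ
      (fun a : Fin q => if h : (a : ℕ) < d then y ⟨a, h⟩ else 0) = w ⬝ᵥ y := by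
  unfold dotProduct
  set F : ℕ → ℝ := fun j => if h : j < d then w ⟨j, h⟩ * y ⟨j, h⟩ else 0 with hF
  have h1 : ∀ a : Fin q, (if h : (a:ℕ) < d then w ⟨a,h⟩ else 0) *
      (if h : (a:ℕ) < d then y ⟨a,h⟩ else 0)
      = F (a : ℕ) := by
    intro a
    rw [hF]
    by_cases h : (a:ℕ) < d
    · rw [dif_pos h, dif_pos h]
      show _ = (if h : (a:ℕ) < d then w ⟨(a:ℕ), h⟩ * y ⟨(a:ℕ), h⟩ else 0)
      rw [dif_pos h]
    · rw [dif_neg h, zero_mul]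
      show (0:ℝ) = (if h : (a:ℕ) < d then w ⟨(a:ℕ), h⟩ * y ⟨(a:ℕ), h⟩ else 0)
      rw [dif_neg h]
  have h2 : ∀ a : Fin d, w a * y a = F (a : ℕ) := by
    intro a
    rw [hF]
    show _ = (if h : (a:ℕ) < d then w ⟨(a:ℕ), h⟩ * y ⟨(a:ℕ), h⟩ else 0)
    rw [dif_pos a.isLt]
  rw [Finset.sum_congr rfl (fun a _ => h1 a), Finset.sum_congr rfl (fun a _ => h2 a),
    Fin.sum_univ_eq_sum_range, Fin.sum_univ_eq_sum_range]
  symm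
  apply Finset.sum_subset (Finset.range_subset_range.2 hdq)
  intro j _ hj
  rw [Finset.mem_range] at hj
  rw [hF]
  exact dif_neg hj

lemma fiber_bound (γ : ℕ → ℕ → ℕ → ℕ) (hγ : BoundCondition γ)
    (n : ℕ → ℕ) (hn : ∀ l, 0 < n l)
    (W : ∀ l : ℕ, Matrix (Fin (n (l + 1))) (Fin (n l)) ℝ)
    (b : ∀ l : ℕ, Fin (n (l + 1)) → ℝ)
    (k : ℕ) (J : ℕ) (u' : ∀ l : Fin k, Fin (n (l.val + 1)) → Bool) :
    {u : ∀ l : Fin (k+1), Fin (n (l.val + 1)) → Bool |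
        u ∈ Set.range (msig n W b (k+1)) ∧ J ≤ minAct n (k+1) u ∧
          (fun l : Fin k => u l.castSucc) = u'}.ncard
      ≤ tailSum (clip (min (minAct n k u') (n (k+1)))
          (γ (n (k+1)) (min (minAct n k u') (n (k+1))))) J := by
  classical
  have hnk := hn (k+1)
  set m := minAct n k u' with hm
  set q := min m (n (k+1)) with hq
  obtain ⟨N, hNγ⟩ := support_bound (hγ.1 (n (k+1)) q hnk (by omega))
  set P := {u : ∀ l : Fin (k+1), Fin (n (l.val + 1)) → Bool |
      u ∈ Set.range (msig n W b (k+1)) ∧ J ≤ minAct n (k+1) u ∧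
        (fun l : Fin k => u l.castSucc) = u'} with hP
  have hmem : ∀ u ∈ P, ∃ x, msig n W b (k+1) x = u ∧ msig n W b k x = u' ∧
      sig (W k) (b k) (fwd n W b k x) = u (Fin.last k) ∧
      J ≤ cnt (u (Fin.last k)) ∧ J ≤ m := by
    rintro u ⟨⟨x, hx⟩, hJu, hpre⟩
    have hpre' : msig n W b k x = u' := by
      funext l
      exact (congrFun hx l.castSucc).trans (congrFun hpre l)
    have hminu : minAct n (k+1) u = min (cnt (u (Fin.last k))) m := by
      rw [minAct_succ n k u, hpre, ← hm]
    refine ⟨x, hx, hpre', congrFun hx (Fin.last k), ?_, ?_⟩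
    · rw [hminu] at hJu
      exact le_trans hJu (min_le_left _ _)
    · rw [hminu] at hJu
      exact le_trans hJu (min_le_right _ _)
  by_cases hJq : J ≤ q
  swap
  · have hPe : P = ∅ := by
      ext u
      simp only [Set.mem_empty_iff_false, iff_false]
      intro hu
      obtain ⟨x, _, _, _, hJc, hJm⟩ := hmem u hu
      have hc : cnt (u (Fin.last k)) ≤ n (k+1) := cnt_le _
      exact hJq (by omega)
    rw [hPe, Set.ncard_empty]
    exact Nat.zero_le _
  rw [tailSum_clip hNγ q J, if_pos hJq]
  obtain ⟨d, hd, A, c, g, hA⟩ := fwd_affine n W b k u'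
  rw [← hm] at hd
  have hinj : Set.InjOn (fun u => u (Fin.last k)) P := by
    intro u₁ h₁ u₂ h₂ he
    funext l
    refine Fin.lastCases ?_ (fun l' => ?_) l
    · exact he
    · exact (congrFun h₁.2.2 l').trans (congrFun h₂.2.2 l').symm
  rw [← Set.ncard_image_of_injOn hinj]
  rcases Nat.eq_zero_or_pos q with hq0 | hqpos
  · have hJ0 : J = 0 := by omega
    have hd0 : d = 0 := by omega
    subst hd0
    have hA0 : ∀ x, A *ᵥ g x = 0 := by
      intro x
      funext i
      simp [Matrix.mulVec, dotProduct]
    have hsub : (fun u => u (Fin.last k)) '' P ⊆ {sig (W k) (b k) c} := by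
      rintro s ⟨u, hu, rfl⟩
      obtain ⟨x, hx, hpre', hlast, _, _⟩ := hmem u hu
      have hc : fwd n W b k x = c := by
        rw [hA x hpre', hA0, zero_add]
      rw [Set.mem_singleton_iff]
      show u (Fin.last k) = _
      rw [← hlast, hc]
    calc ((fun u => u (Fin.last k)) '' P).ncard
        ≤ ({sig (W k) (b k) c} : Set (Fin (n (k+1)) → Bool)).ncard :=
          Set.ncard_le_ncard hsub (Set.finite_singleton _)
      _ = 1 := Set.ncard_singleton _
      _ ≤ tailSum (γ (n (k+1)) q) J := by
          have h1 := hγ.2.1 (n (k+1)) hnk 0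
          have h2 : tailSum (histE 0) 0 = 1 := by
            rw [tailSum_eq (N := 1) (v := histE 0) (fun j hj => by
              unfold histE
              rw [if_neg (by omega)]) 0]
            simp [histE]
          rw [hJ0, hq0]
          rw [h2] at h1
          exact h1
  · by_cases hdn : d ≤ n (k+1)
    · have hdq : d ≤ q := le_min hd hdn
      have hsub : (fun u => u (Fin.last k)) '' P ⊆
          {s | s ∈ Set.range (sig
              (fun i (a : Fin q) => if h : (a : ℕ) < d then (W k * A) i ⟨a, h⟩ else 0)
              (fun i => W k i ⬝ᵥ c + b k i)) ∧ J ≤ cnt s} := by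
        rintro s ⟨u, hu, rfl⟩
        obtain ⟨x, hx, hpre', hlast, hJc, _⟩ := hmem u hu
        refine ⟨⟨fun a => if h : (a : ℕ) < d then g x ⟨a, h⟩ else 0, ?_⟩, hJc⟩
        show _ = u (Fin.last k)
        rw [← hlast]
        funext i
        show decide _ = decide _
        have heq : (fun (a : Fin q) => if h : (a : ℕ) < d then (W k * A) i ⟨a, h⟩ else 0) ⬝ᵥ
            (fun a => if h : (a : ℕ) < d then g x ⟨a, h⟩ else 0) + (W k i ⬝ᵥ c + b k i)
            = W k i ⬝ᵥ fwd n W b k x + b k i := by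
          rw [dot_pad hdq ((W k * A) i) (g x), hA x hpre', dotProduct_add]
          have h3 : W k i ⬝ᵥ (A *ᵥ g x) = (W k * A) i ⬝ᵥ g x :=
            congrFun (Matrix.mulVec_mulVec (g x) (W k) A) i
          rw [h3]
          ring
        rw [heq]
      calc ((fun u => u (Fin.last k)) '' P).ncard
          ≤ {s | s ∈ Set.range (sig
              (fun i (a : Fin q) => if h : (a : ℕ) < d then (W k * A) i ⟨a, h⟩ else 0)
              (fun i => W k i ⬝ᵥ c + b k i)) ∧ J ≤ cnt s}.ncard :=
            Set.ncard_le_ncard hsub (Set.toFinite _)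
        _ = tailSum (actHist (n (k+1)) (Set.range (sig
              (fun i (a : Fin q) => if h : (a : ℕ) < d then (W k * A) i ⟨a, h⟩ else 0)
              (fun i => W k i ⬝ᵥ c + b k i)))) J :=
            (tail_count _ cnt (n (k+1) + 1) (fun s => Nat.lt_succ_of_le (cnt_le s)) J).symm
        _ ≤ tailSum (γ (n (k+1)) q) J :=
            hγ.2.2.1 q (n (k+1)) hqpos hnk (by omega) _ _ J
    · have hqn : q = n (k+1) := by omega
      have hsub : (fun u => u (Fin.last k)) '' P ⊆
          {s | s ∈ Set.range (sig (1 : Matrix (Fin (n (k+1))) (Fin (n (k+1))) ℝ) (b k))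
            ∧ J ≤ cnt s} := by
        rintro s ⟨u, hu, rfl⟩
        obtain ⟨x, hx, hpre', hlast, hJc, _⟩ := hmem u hu
        refine ⟨⟨W k *ᵥ fwd n W b k x, ?_⟩, hJc⟩
        show _ = u (Fin.last k)
        rw [← hlast]
        funext i
        show decide _ = decide _
        have heq : (1 : Matrix (Fin (n (k+1))) (Fin (n (k+1))) ℝ) i ⬝ᵥ (W k *ᵥ fwd n W b k x)
            = W k i ⬝ᵥ fwd n W b k x :=
          congrFun (Matrix.one_mulVec (W k *ᵥ fwd n W b k x)) i
        rw [heq]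
      calc ((fun u => u (Fin.last k)) '' P).ncard
          ≤ {s | s ∈ Set.range (sig (1 : Matrix (Fin (n (k+1))) (Fin (n (k+1))) ℝ) (b k))
              ∧ J ≤ cnt s}.ncard :=
            Set.ncard_le_ncard hsub (Set.toFinite _)
        _ = tailSum (actHist (n (k+1)) (Set.range
              (sig (1 : Matrix (Fin (n (k+1))) (Fin (n (k+1))) ℝ) (b k)))) J :=
            (tail_count _ cnt (n (k+1) + 1) (fun s => Nat.lt_succ_of_le (cnt_le s)) J).symm
        _ ≤ tailSum (γ (n (k+1)) (n (k+1))) J :=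
            hγ.2.2.1 (n (k+1)) (n (k+1)) hnk hnk le_rfl _ _ J
        _ = tailSum (γ (n (k+1)) q) J := by rw [hqn]

/-- Let `γ ∈ Γ` satisfy the bound condition. In the multilayer setting with widths
`n 0, …, n L`, for every `l ∈ {2, …, L}` the dimension histograms satisfy the recursion
`H̃^{(l)}(𝒮^{(l)}_h) ≼ φ^{(γ)}_{n_l}(H̃^{(l-1)}(𝒮^{(l-1)}_h))`. -/
theorem stmt13 (γ : ℕ → ℕ → ℕ → ℕ) (hγ : BoundCondition γ)
    (L : ℕ) (hL : 0 < L) (n : ℕ → ℕ) (hn : ∀ l, 0 < n l)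
    (W : ∀ l : ℕ, Matrix (Fin (n (l + 1))) (Fin (n l)) ℝ)
    (b : ∀ l : ℕ, Fin (n (l + 1)) → ℝ)
    (l : ℕ) (hl1 : 2 ≤ l) (hl2 : l ≤ L) :
    hle (dimHist n l (Set.range (msig n W b l)))
      (phi γ (n l) (dimHist n (l - 1) (Set.range (msig n W b (l - 1))))) := by
  obtain ⟨k, rfl⟩ : ∃ k, l = k + 1 := ⟨l - 1, by omega⟩
  show hle (dimHist n (k+1) (Set.range (msig n W b (k+1))))
    (phi γ (n (k+1)) (dimHist n k (Set.range (msig n W b k))))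
  intro J
  classical
  have hLHS : tailSum (dimHist n (k+1) (Set.range (msig n W b (k+1)))) J
      = {u ∈ Set.range (msig n W b (k+1)) | J ≤ minAct n (k+1) u}.ncard :=
    tail_count _ _ (n 0 + 1) (fun u => Nat.lt_succ_of_le (minAct_le n (k+1) u)) J
  have hv : ∀ m, n 0 + 1 ≤ m → dimHist n k (Set.range (msig n W b k)) m = 0 := by
    intro m hm
    show {u ∈ Set.range (msig n W b k) | minAct n k u = m}.ncard = 0
    have he : {u ∈ Set.range (msig n W b k) | minAct n k u = m} = ∅ := by
      ext u
      simp only [Set.mem_setOf_eq, Set.mem_empty_iff_false, iff_false]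
      rintro ⟨_, hmm⟩
      have := minAct_le n k u
      omega
    rw [he, Set.ncard_empty]
  rw [hLHS, tailSum_phi γ (n (k+1)) _ (n 0 + 1) hv J]
  set s1 : Finset (∀ l : Fin (k+1), Fin (n (l.val + 1)) → Bool) :=
    Finset.univ.filter
      (fun u => u ∈ Set.range (msig n W b (k+1)) ∧ J ≤ minAct n (k+1) u) with hs1
  have hset1 : {u ∈ Set.range (msig n W b (k+1)) | J ≤ minAct n (k+1) u} = ↑s1 := by
    ext u
    simp [hs1]
  rw [hset1, Set.ncard_coe_finset]
  set t0 : Finset (∀ l : Fin k, Fin (n (l.val + 1)) → Bool) :=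
    Finset.univ.filter (fun u' => u' ∈ Set.range (msig n W b k)) with ht0
  have hmap : ∀ u ∈ s1, (fun l : Fin k => u l.castSucc) ∈ t0 := by
    intro u hu
    rw [hs1, Finset.mem_filter] at hu
    obtain ⟨x, hx⟩ := hu.2.1
    rw [ht0, Finset.mem_filter]
    refine ⟨Finset.mem_univ _, x, ?_⟩
    funext l
    exact congrFun hx l.castSucc
  rw [Finset.card_eq_sum_card_fiberwise hmap]
  have hstep : ∀ u' ∈ t0,
      (s1.filter (fun u => (fun l : Fin k => u l.castSucc) = u')).card
      ≤ tailSum (clip (min (minAct n k u') (n (k+1)))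
          (γ (n (k+1)) (min (minAct n k u') (n (k+1))))) J := by
    intro u' _
    have hfs : ↑(s1.filter (fun u => (fun l : Fin k => u l.castSucc) = u'))
        = {u : ∀ l : Fin (k+1), Fin (n (l.val + 1)) → Bool |
            u ∈ Set.range (msig n W b (k+1)) ∧ J ≤ minAct n (k+1) u ∧
              (fun l : Fin k => u l.castSucc) = u'} := by
      ext u
      simp only [hs1, Finset.coe_filter, Finset.mem_filter, Finset.mem_univ, true_and,
        Set.mem_setOf_eq]
      tauto
    rw [← Set.ncard_coe_finset, hfs]
    exact fiber_bound γ hγ n hn W b k J u'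
  calc ∑ u' ∈ t0, (s1.filter (fun u => (fun l : Fin k => u l.castSucc) = u')).card
      ≤ ∑ u' ∈ t0, tailSum (clip (min (minAct n k u') (n (k+1)))
          (γ (n (k+1)) (min (minAct n k u') (n (k+1))))) J :=
        Finset.sum_le_sum hstep
    _ = ∑ mm ∈ t0.image (fun u' => minAct n k u'),
        (t0.filter (fun u' => minAct n k u' = mm)).card •
          tailSum (clip (min mm (n (k+1))) (γ (n (k+1)) (min mm (n (k+1))))) J :=
        Finset.sum_comp
          (fun mm => tailSum (clip (min mm (n (k+1))) (γ (n (k+1)) (min mm (n (k+1))))) J)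
          (fun u' => minAct n k u')
    _ = ∑ mm ∈ Finset.range (n 0 + 1),
        (t0.filter (fun u' => minAct n k u' = mm)).card •
          tailSum (clip (min mm (n (k+1))) (γ (n (k+1)) (min mm (n (k+1))))) J := by
        apply Finset.sum_subset
        · intro mm hmm
          rw [Finset.mem_image] at hmm
          obtain ⟨u', _, hma⟩ := hmm
          rw [Finset.mem_range]
          have := minAct_le n k u'
          omega
        · intro mm _ hmm
          have hfe : t0.filter (fun u' => minAct n k u' = mm) = ∅ := by
            rw [Finset.filter_eq_empty_iff]
            intro u' hu' hma
            exact hmm (Finset.mem_image.2 ⟨u', hu', hma⟩)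
          rw [hfe, Finset.card_empty, zero_smul]
    _ = ∑ mm ∈ Finset.range (n 0 + 1),
        dimHist n k (Set.range (msig n W b k)) mm *
          tailSum (clip (min mm (n (k+1))) (γ (n (k+1)) (min mm (n (k+1))))) J := by
        apply Finset.sum_congr rfl
        intro mm _
        rw [smul_eq_mul]
        congr 1
        show _ = {u ∈ Set.range (msig n W b k) | minAct n k u = mm}.ncard
        rw [show {u ∈ Set.range (msig n W b k) | minAct n k u = mm}
            = ↑(t0.filter (fun u' => minAct n k u' = mm)) by
          ext u'
          simp [ht0], Set.ncard_coe_finset]
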